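/- Let 𝒢 = (V, ℰ) be a temporal graph with k ≥ 1, and let [a,b] and [c,d] be time intervals such that each of the temporal k-cores 𝒯_{[a,b]}(𝒢) and 𝒯_{[c,d]}(𝒢) contains at least one temporal edge. If the minimum edge timestamp of 𝒯_{[a,b]}(𝒢) equals that of 𝒯_{[c,d]}(𝒢), and the maximum edge timestamp of 𝒯_{[a,b]}(𝒢) equals that of 𝒯_{[c,d]}(𝒢), then 𝒯_{[a,b]}(𝒢) = 𝒯_{[c,d]}(𝒢); i.e., a temporal k-core is uniquely identified by its tightest time interval. -/

import Mathlib

open scoped Classical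

noncomputable section

/-- A temporal graph on a vertex type `V`: a finite set of temporal edges
`(u, v, t)` with `u ≠ v`, symmetric in the two endpoints. -/
structure TemporalGraph (V : Type*) where
  E : Finset (V × V × ℕ)
  ne : ∀ e ∈ E, e.1 ≠ e.2.1
  symm : ∀ u v t, (u, v, t) ∈ E → (v, u, t) ∈ E

variable {V : Type*}

/-- The detemporalized (projected) simple graph of `G` over the interval `[ts, te]`. -/
def detemp (G : TemporalGraph V) (ts te : ℕ) : SimpleGraph V where
  Adj u v := ∃ t, ts ≤ t ∧ t ≤ te ∧ (u, v, t) ∈ G.E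
  symm := ⟨fun u v ⟨t, h1, h2, h3⟩ => ⟨t, h1, h2, G.symm u v t h3⟩⟩
  loopless := ⟨fun u ⟨_, _, _, h3⟩ => (G.ne _ h3) rfl⟩

/-- The detemporalized simple graph of `G` over all timestamps. -/
def detempAll (G : TemporalGraph V) : SimpleGraph V where
  Adj u v := ∃ t, (u, v, t) ∈ G.E
  symm := ⟨fun u v ⟨t, h3⟩ => ⟨t, G.symm u v t h3⟩⟩
  loopless := ⟨fun u ⟨_, h3⟩ => (G.ne _ h3) rfl⟩

/-- `S` is `k`-dense in the simple graph `G` if every vertex of `S` has at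
least `k` neighbors inside `S`. -/
def kDense (k : ℕ) (G : SimpleGraph V) (S : Set V) : Prop :=
  ∀ v ∈ S, k ≤ {u | u ∈ S ∧ G.Adj v u}.ncard

/-- `C_k(G)`: the union of all `k`-dense sets of `G`. -/
def coreSet (k : ℕ) (G : SimpleGraph V) : Set V :=
  ⋃₀ {S | kDense k G S}

/-- The projected temporal edge set of `G` over `[ts, te]`. -/
def projE (G : TemporalGraph V) (ts te : ℕ) : Finset (V × V × ℕ) :=
  G.E.filter fun e => ts ≤ e.2.2 ∧ e.2.2 ≤ te

/-- The vertex set of the temporal `k`-core of `G` over `[ts, te]`. -/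
def tcoreV (k : ℕ) (G : TemporalGraph V) (ts te : ℕ) : Set V :=
  coreSet k (detemp G ts te)

/-- The temporal edge set of the temporal `k`-core of `G` over `[ts, te]`. -/
def tcoreE (k : ℕ) (G : TemporalGraph V) (ts te : ℕ) : Finset (V × V × ℕ) :=
  (projE G ts te).filter fun e => e.1 ∈ tcoreV k G ts te ∧ e.2.1 ∈ tcoreV k G ts te

/-- The `k`-core time `σ_x(v, G)` of a vertex `v` w.r.t. start timestamp `x`,
in `ℕ∞` (it is `⊤` if no suitable timestamp exists). -/
def coreTime (k : ℕ) (G : TemporalGraph V) (x : ℕ) (v : V) : ℕ∞ :=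
  sInf ((fun t : ℕ => (t : ℕ∞)) '' {t | x ≤ t ∧ v ∈ tcoreV k G x t})

/-- The `k`-core time `σ_x(u, v, G)` of a pair `(u, v)` w.r.t. start timestamp `x`. -/
def edgeCoreTime (k : ℕ) (G : TemporalGraph V) (x : ℕ) (u v : V) : ℕ∞ :=
  sInf ((fun t : ℕ => (t : ℕ∞)) ''
    {t | x ≤ t ∧ u ∈ tcoreV k G x t ∧ v ∈ tcoreV k G x t ∧ (detemp G x t).Adj u v})

/-- The support time `Sup_x(u, v, G)`: the minimum timestamp `t ≥ x` with `(u, v, t) ∈ ℰ`. -/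
def supTime (G : TemporalGraph V) (x : ℕ) (u v : V) : ℕ∞ :=
  sInf ((fun t : ℕ => (t : ℕ∞)) '' {t | x ≤ t ∧ (u, v, t) ∈ G.E})

/-- The `k`-degree time `d_x(v, G)`: the minimum timestamp `t ≥ x` such that `v`
has at least `k` neighbors in the detemporalized graph over `[x, t]`. -/
def degTime (k : ℕ) (G : TemporalGraph V) (x : ℕ) (v : V) : ℕ∞ :=
  sInf ((fun t : ℕ => (t : ℕ∞)) '' {t | x ≤ t ∧ k ≤ ((detemp G x t).neighborSet v).ncard})

/-- The `k`-th smallest element of a multiset of values in `ℕ∞`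
(`⊤` if the multiset has fewer than `k` elements). -/
def kthSmallest (m : Multiset ℕ∞) (k : ℕ) : ℕ∞ :=
  (m.sort (· ≤ ·)).getD (k - 1) ⊤

end

section Aux

variable {V : Type*} [Fintype V]

lemma kDense_mono {k : ℕ} {G H : SimpleGraph V} (h : G ≤ H) {S : Set V}
    (hS : kDense k G S) : kDense k H S := by
  intro v hv
  refine le_trans (hS v hv) (Set.ncard_le_ncard ?_ (Set.toFinite _))
  exact fun u hu => ⟨hu.1, h hu.2⟩

lemma detemp_mono (G : TemporalGraph V) {a b ts te : ℕ} (h1 : a ≤ ts) (h2 : te ≤ b) :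
    detemp G ts te ≤ detemp G a b := by
  rintro u v ⟨t, ht1, ht2, ht3⟩
  exact ⟨t, le_trans h1 ht1, le_trans ht2 h2, ht3⟩

lemma coreSet_kDense (k : ℕ) (G : SimpleGraph V) : kDense k G (coreSet k G) := by
  rintro v ⟨S, hS, hvS⟩
  refine le_trans (hS v hvS) (Set.ncard_le_ncard ?_ (Set.toFinite _))
  exact fun u hu => ⟨⟨S, hS, hu.1⟩, hu.2⟩

lemma mem_coreSet_of_kDense {k : ℕ} {G : SimpleGraph V} {S : Set V}
    (hS : kDense k G S) {v} (hv : v ∈ S) : v ∈ coreSet k G := ⟨S, hS, hv⟩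

lemma mem_tcoreE_iff {k : ℕ} {G : TemporalGraph V} {a b : ℕ} {e : V × V × ℕ} :
    e ∈ tcoreE k G a b ↔ e ∈ G.E ∧ (a ≤ e.2.2 ∧ e.2.2 ≤ b) ∧
      e.1 ∈ tcoreV k G a b ∧ e.2.1 ∈ tcoreV k G a b := by
  simp [tcoreE, projE, Finset.mem_filter, and_assoc]

/-- A temporal k-core equals the temporal k-core over its tightest interval. -/
lemma tcore_tight (k : ℕ) (G : TemporalGraph V) (a b : ℕ)
    (hne : (tcoreE k G a b).Nonempty) :
    tcoreV k G a b = tcoreV k G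
      (((tcoreE k G a b).image fun e => e.2.2).min' (hne.image _))
      (((tcoreE k G a b).image fun e => e.2.2).max' (hne.image _)) ∧
    tcoreE k G a b = tcoreE k G
      (((tcoreE k G a b).image fun e => e.2.2).min' (hne.image _))
      (((tcoreE k G a b).image fun e => e.2.2).max' (hne.image _)) := by
  set ts := ((tcoreE k G a b).image fun e => e.2.2).min' (hne.image _) with hts
  set te := ((tcoreE k G a b).image fun e => e.2.2).max' (hne.image _) with hte
  have hats : a ≤ ts := by
    obtain ⟨e, he, heq⟩ := Finset.mem_image.mp (((tcoreE k G a b).image fun e => e.2.2).min'_mem (hne.image _))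
    rw [hts, ← heq]; exact (mem_tcoreE_iff.mp he).2.1.1
  have hteb : te ≤ b := by
    obtain ⟨e, he, heq⟩ := Finset.mem_image.mp (((tcoreE k G a b).image fun e => e.2.2).max'_mem (hne.image _))
    rw [hte, ← heq]; exact (mem_tcoreE_iff.mp he).2.1.2
  -- every t ∈ [ts,te] window containment
  have hmem : ∀ e ∈ tcoreE k G a b, ts ≤ e.2.2 ∧ e.2.2 ≤ te := by
    intro e he
    have h1 := Finset.min'_le _ e.2.2 (Finset.mem_image_of_mem (fun e => e.2.2) he)
    have h2 := Finset.le_max' _ e.2.2 (Finset.mem_image_of_mem (fun e => e.2.2) he)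
    rw [← hts] at h1; rw [← hte] at h2
    exact ⟨h1, h2⟩
  have hVeq : tcoreV k G a b = tcoreV k G ts te := by
    apply Set.Subset.antisymm
    · -- coreSet of [a,b] is k-dense in detemp ts te
      have hdense : kDense k (detemp G ts te) (tcoreV k G a b) := by
        intro v hv
        refine le_trans (coreSet_kDense k (detemp G a b) v hv)
          (Set.ncard_le_ncard ?_ (Set.toFinite _))
        rintro u ⟨hu, t, ht1, ht2, ht3⟩
        have heE : (v, u, t) ∈ tcoreE k G a b :=
          mem_tcoreE_iff.mpr ⟨ht3, ⟨ht1, ht2⟩, hv, hu⟩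
        obtain ⟨h1, h2⟩ := hmem _ heE
        exact ⟨hu, t, h1, h2, ht3⟩
      exact fun v hv => mem_coreSet_of_kDense hdense hv
    · intro v hv
      obtain ⟨S, hS, hvS⟩ := hv
      exact ⟨S, kDense_mono (detemp_mono G hats hteb) hS, hvS⟩
  refine ⟨hVeq, ?_⟩
  ext e
  constructor
  · intro he
    obtain ⟨h1, h2⟩ := hmem e he
    obtain ⟨hE, _, hu, hv⟩ := mem_tcoreE_iff.mp he
    exact mem_tcoreE_iff.mpr ⟨hE, ⟨h1, h2⟩, hVeq ▸ hu, hVeq ▸ hv⟩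
  · intro he
    obtain ⟨hE, ⟨h1, h2⟩, hu, hv⟩ := mem_tcoreE_iff.mp he
    exact mem_tcoreE_iff.mpr ⟨hE, ⟨le_trans hats h1, le_trans h2 hteb⟩,
      hVeq ▸ hu, hVeq ▸ hv⟩

end Aux

/-- A temporal `k`-core is uniquely identified by its tightest time
interval: if the temporal `k`-cores over `[a, b]` and `[c, d]` both have at least
one temporal edge and their minimum and maximum edge timestamps agree, then the
two temporal `k`-cores are equal. -/
theorem stmt14 {V : Type*} [Fintype V] (k : ℕ) (hk : 1 ≤ k)
    (G : TemporalGraph V) (a b c d : ℕ) (hab : a ≤ b) (hcd : c ≤ d)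
    (hne1 : (tcoreE k G a b).Nonempty) (hne2 : (tcoreE k G c d).Nonempty)
    (hmin : (((tcoreE k G a b).image fun e => e.2.2).min' (hne1.image _)) =
            (((tcoreE k G c d).image fun e => e.2.2).min' (hne2.image _)))
    (hmax : (((tcoreE k G a b).image fun e => e.2.2).max' (hne1.image _)) =
            (((tcoreE k G c d).image fun e => e.2.2).max' (hne2.image _))) :
    tcoreV k G a b = tcoreV k G c d ∧ tcoreE k G a b = tcoreE k G c d := by
  obtain ⟨hV1, hE1⟩ := tcore_tight k G a b hne1
  obtain ⟨hV2, hE2⟩ := tcore_tight k G c d hne2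
  rw [hmin, hmax] at hV1 hE1
  exact ⟨hV1.trans hV2.symm, hE1.trans hE2.symm⟩
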